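/- Let q be a non-integer positive rational that is not the reciprocal of any integer, and let α be a positive irreducible n-th root of q. Then the additive monoid ℕ₀[α] is atomic, and its set of atoms is exactly {α^k : k ∈ ℕ₀}. -/

import Mathlib

/-- `a` is an (additive) atom of the submonoid `S`. -/
def IsAddAtomIn {R : Type*} [AddCommMonoid R] (S : AddSubmonoid R) (a : R) : Prop :=
  a ∈ S ∧ a ≠ 0 ∧ ∀ u v, u ∈ S → v ∈ S → u ≠ 0 → v ≠ 0 → a ≠ u + v

open Polynomial in
lemma aux_minpoly_natDegree (q : ℚ) (hq : 0 < q) (n : ℕ) (hn : 1 ≤ n) (α : ℝ) (hαpos : 0 < α)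
    (hroot : α ^ n = (q : ℝ)) (hirr : ∀ i, 1 ≤ i → i < n → Irrational (α ^ i)) :
    (minpoly ℚ α).natDegree = n := by
  have hn0 : n ≠ 0 := by omega
  have hmonic : (X ^ n - C q : ℚ[X]).Monic := monic_X_pow_sub_C q hn0
  have haev : Polynomial.aeval α (X ^ n - C q : ℚ[X]) = 0 := by
    simp [hroot]
  have hint : IsIntegral ℚ α := ⟨X ^ n - C q, hmonic, haev⟩
  have hdvd : minpoly ℚ α ∣ X ^ n - C q := minpoly.dvd ℚ α haev
  have hdle : (minpoly ℚ α).natDegree ≤ n := by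
    have := Polynomial.natDegree_le_of_dvd hdvd hmonic.ne_zero
    rwa [natDegree_X_pow_sub_C] at this
  have hdpos : 0 < (minpoly ℚ α).natDegree := minpoly.natDegree_pos hint
  set d := (minpoly ℚ α).natDegree with hd
  -- complex side
  set P : ℂ[X] := (minpoly ℚ α).map (algebraMap ℚ ℂ) with hP
  have hPmonic : P.Monic := (minpoly.monic hint).map _
  have hPdeg : P.natDegree = d := natDegree_map _
  have hsplits : P.Splits := IsAlgClosed.splits _
  have hcoeff := hsplits.coeff_zero_eq_prod_roots_of_monic hPmonic
  have hcard : Multiset.card P.roots = d := by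
    rw [← hPdeg]
    exact (splits_iff_card_roots.1 hsplits)
  have habs : ∀ z ∈ P.roots, ‖z‖ = α := by
    intro z hz
    have hzr : Polynomial.aeval z (minpoly ℚ α) = 0 := by
      have := (mem_roots hPmonic.ne_zero).1 hz
      rw [IsRoot, hP, eval_map, ← aeval_def] at this
      exact this
    have hz2 : Polynomial.aeval z (X ^ n - C q : ℚ[X]) = 0 := by
      obtain ⟨g, hg⟩ := hdvd
      rw [hg, map_mul, hzr, zero_mul]
    have hzn : z ^ n = (q : ℂ) := by
      simpa [sub_eq_zero] using hz2
    have : ‖z‖ ^ n = α ^ n := by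
      rw [← norm_pow, hzn, hroot]
      rw [show ((q:ℂ)) = ((q:ℝ):ℂ) by push_cast; ring, Complex.norm_real, Real.norm_eq_abs,
        abs_of_nonneg (by positivity)]
    exact (pow_left_inj₀ (norm_nonneg z) hαpos.le hn0).1 this
  have hprod : ‖P.roots.prod‖ = α ^ d := by
    rw [show ‖P.roots.prod‖ = (P.roots.map (‖·‖)).prod from map_multiset_prod (normHom (α := ℂ)) _]
    rw [Multiset.map_congr rfl habs]
    simp [Multiset.map_const', hcard]
  have hc0 : ‖P.coeff 0‖ = α ^ d := by
    rw [hcoeff, norm_mul, norm_pow]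
    simp [hprod]
  have hrat : ¬ Irrational (α ^ d) := by
    rw [← hc0, hP, coeff_map]
    have : (algebraMap ℚ ℂ) ((minpoly ℚ α).coeff 0) = (((((minpoly ℚ α).coeff 0 : ℚ) : ℝ)) : ℂ) := by
      push_cast; rfl
    rw [this, Complex.norm_real, Real.norm_eq_abs]
    intro h
    exact h ⟨|(minpoly ℚ α).coeff 0|, by push_cast; rfl⟩
  rcases lt_or_eq_of_le hdle with h | h
  · exact absurd (hirr d hdpos h) hrat
  · exact h

open Polynomial in
lemma aux_indep (q : ℚ) (hq : 0 < q) (n : ℕ) (hn : 1 ≤ n) (α : ℝ) (hαpos : 0 < α)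
    (hroot : α ^ n = (q : ℝ)) (hirr : ∀ i, 1 ≤ i → i < n → Irrational (α ^ i))
    (c : ℕ → ℚ) (hsum : ∑ i ∈ Finset.range n, (c i : ℝ) * α ^ i = 0) :
    ∀ i ∈ Finset.range n, c i = 0 := by
  set p : ℚ[X] := ∑ i ∈ Finset.range n, C (c i) * X ^ i with hp
  have haev : Polynomial.aeval α p = 0 := by
    rw [hp, map_sum]
    simpa using hsum
  have hdeg : p.natDegree < n := by
    have : p.natDegree ≤ n - 1 := by
      apply Polynomial.natDegree_sum_le_of_forall_le
      intro i hi
      exact (Polynomial.natDegree_C_mul_X_pow_le _ _).trans (by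
        simp at hi; omega)
    omega
  have hp0 : p = 0 := by
    by_contra hne
    have hdvd : minpoly ℚ α ∣ p := minpoly.dvd ℚ α haev
    have := Polynomial.natDegree_le_of_dvd hdvd hne
    rw [aux_minpoly_natDegree q hq n hn α hαpos hroot hirr] at this
    omega
  intro i hi
  have : p.coeff i = c i := by
    rw [hp, Polynomial.finset_sum_coeff]
    simp only [Polynomial.coeff_C_mul, Polynomial.coeff_X_pow, mul_ite, mul_one, mul_zero]
    rw [Finset.sum_ite_eq (Finset.range n) i c]
    simp [hi]
  rw [hp0] at this
  simpa using this.symm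

-- sum of positive terms over nonempty multiset is positive
lemma aux_pos_sum {J : Multiset ℕ} (f : ℕ → ℚ) (hf : ∀ j, 0 < f j) (hJ : J ≠ 0) :
    0 < (J.map f).sum := by
  obtain ⟨j, hj⟩ := Multiset.exists_mem_of_ne_zero hJ
  have h1 : f j ≤ (J.map f).sum :=
    Multiset.single_le_sum (by
      intro x hx
      obtain ⟨y, _, rfl⟩ := Multiset.mem_map.1 hx
      exact (hf y).le) _ (Multiset.mem_map.2 ⟨j, hj, rfl⟩)
  exact lt_of_lt_of_le (hf j) h1

lemma aux_cast_sum (q : ℚ) (g : ℕ → ℕ) (J : Multiset ℕ) :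
    (((J.map fun e => q.num ^ e * (q.den:ℤ) ^ (g e)).sum : ℤ) : ℚ)
      = (J.map fun e => (q.num:ℚ) ^ e * (q.den:ℚ) ^ (g e)).sum := by
  induction J using Multiset.induction_on with
  | empty => simp
  | cons e J ih =>
    simp only [Multiset.map_cons, Multiset.sum_cons, Int.cast_add]
    rw [ih]
    push_cast
    ring

lemma aux_rat (q : ℚ) (hq : 0 < q) (ha : 2 ≤ q.num) (hb : 2 ≤ q.den) (j0 : ℕ)
    (J : Multiset ℕ) (hsum : (J.map fun j => q ^ j).sum = q ^ j0) :
    Multiset.card J ≤ 1 := by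
  by_contra hcard
  push_neg at hcard
  have hqpow : ∀ j : ℕ, 0 < q ^ j := fun j => pow_pos hq j
  have hb0 : (q.den : ℚ) ≠ 0 := by positivity
  have ha0 : (0:ℤ) < q.num := by omega
  have hqden : q * (q.den : ℚ) = (q.num : ℚ) :=
    (eq_div_iff hb0).1 (Rat.num_div_den q).symm
  have hcop : q.num.natAbs.Coprime q.den := q.reduced
  -- j0 ∉ J
  have hj0 : j0 ∉ J := by
    intro hmem
    obtain ⟨J', rfl⟩ := Multiset.exists_cons_of_mem hmem
    rw [Multiset.map_cons, Multiset.sum_cons] at hsum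
    have hz : (J'.map fun j => q ^ j).sum = 0 := by linarith
    have hJ' : J' ≠ 0 := by
      intro h
      rw [h] at hcard; simp at hcard
    exact absurd hz (aux_pos_sum _ hqpow hJ').ne'
  have hJne : J ≠ 0 := by
    intro h; rw [h] at hcard; simp at hcard
  have hq1 : q ≠ 1 := by
    intro h; rw [h] at hb; simp [Rat.den_ofNat] at hb
  -- term bound: each q^e with e ∈ J is ≤ q^j0
  have hterm : ∀ e ∈ J, q ^ e ≤ q ^ j0 := by
    intro e he
    rw [← hsum]
    exact Multiset.single_le_sum (by
      intro x hx; obtain ⟨y, _, rfl⟩ := Multiset.mem_map.1 hx; exact (hqpow y).le) _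
      (Multiset.mem_map.2 ⟨e, he, rfl⟩)
  rcases lt_or_gt_of_ne hq1 with hlt | hgt
  · -- q < 1 : all e > j0
    have hgtj : ∀ e ∈ J, j0 < e := by
      intro e he
      rcases lt_or_ge j0 e with h | h
      · exact h
      · exfalso
        have hne : e ≠ j0 := fun h' => hj0 (h' ▸ he)
        have helt : e < j0 := by omega
        have := pow_lt_pow_right_of_lt_one₀ hq hlt helt
        exact absurd (hterm e he) (by linarith)
    set m := J.sum + j0 + 1 with hm
    have hem : ∀ e ∈ J, e ≤ m := by
      intro e he
      have := Multiset.single_le_sum (fun x _ => Nat.zero_le x) e he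
      omega
    have hj0m : j0 + 1 ≤ m := by omega
    -- multiply by den^m
    have key : (q.num:ℚ) ^ j0 * (q.den:ℚ) ^ (m - j0)
        = (J.map fun e => (q.num:ℚ) ^ e * (q.den:ℚ) ^ (m - e)).sum := by
      have h1 : ∀ e : ℕ, e ≤ m → q ^ e * (q.den:ℚ) ^ m = (q.num:ℚ) ^ e * (q.den:ℚ) ^ (m - e) := by
        intro e hem'
        have : (q.den:ℚ) ^ m = (q.den:ℚ) ^ e * (q.den:ℚ) ^ (m - e) := by
          rw [← pow_add]; congr 1; omega
        rw [this, ← mul_assoc, ← mul_pow, hqden]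
      rw [← h1 j0 (by omega)]
      rw [← hsum, ← Multiset.sum_map_mul_right]
      apply congrArg
      apply Multiset.map_congr rfl
      intro e he
      exact h1 e (hem e he)
    -- move to ℤ
    have keyZ : q.num ^ j0 * (q.den:ℤ) ^ (m - j0)
        = (J.map fun e => q.num ^ e * (q.den:ℤ) ^ (m - e)).sum := by
      have h := key
      rw [← aux_cast_sum q (fun e => m - e) J] at h
      exact_mod_cast h
    have hdvd : (q.num : ℤ) ^ (j0 + 1) ∣ (J.map fun e => q.num ^ e * (q.den:ℤ) ^ (m - e)).sum := by
      apply Multiset.dvd_sum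
      intro x hx
      obtain ⟨e, he, rfl⟩ := Multiset.mem_map.1 hx
      exact Dvd.dvd.mul_right (pow_dvd_pow q.num (hgtj e he)) _
    rw [← keyZ] at hdvd
    have hdvd2 : (q.num : ℤ) ∣ (q.den:ℤ) ^ (m - j0) := by
      have h2 : (q.num:ℤ) ^ (j0+1) = q.num ^ j0 * q.num := pow_succ _ _
      rw [h2] at hdvd
      exact (mul_dvd_mul_iff_left (pow_ne_zero j0 (by omega : q.num ≠ 0))).1 hdvd
    have : q.num.natAbs ∣ q.den ^ (m - j0) := by
      have := Int.natAbs_dvd_natAbs.2 hdvd2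
      simpa [Int.natAbs_pow] using this
    have : q.num.natAbs = 1 := (Nat.Coprime.pow_right _ hcop).eq_one_of_dvd this
    omega
  · -- q > 1 : all e < j0
    have hltj : ∀ e ∈ J, e < j0 := by
      intro e he
      rcases lt_or_ge e j0 with h | h
      · exact h
      · exfalso
        have hne : e ≠ j0 := fun h' => hj0 (h' ▸ he)
        have helt : j0 < e := by omega
        have := pow_lt_pow_right₀ hgt helt
        exact absurd (hterm e he) (by linarith)
    have key : (q.num:ℚ) ^ j0
        = (J.map fun e => (q.num:ℚ) ^ e * (q.den:ℚ) ^ (j0 - e)).sum := by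
      have h1 : ∀ e : ℕ, e ≤ j0 → q ^ e * (q.den:ℚ) ^ j0 = (q.num:ℚ) ^ e * (q.den:ℚ) ^ (j0 - e) := by
        intro e hem'
        have : (q.den:ℚ) ^ j0 = (q.den:ℚ) ^ e * (q.den:ℚ) ^ (j0 - e) := by
          rw [← pow_add]; congr 1; omega
        rw [this, ← mul_assoc, ← mul_pow, hqden]
      have h2 := h1 j0 le_rfl
      simp only [Nat.sub_self, pow_zero, mul_one] at h2
      rw [← h2, ← hsum, ← Multiset.sum_map_mul_right]
      apply congrArg
      apply Multiset.map_congr rfl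
      intro e he
      exact h1 e (hltj e he).le
    have keyZ : q.num ^ j0
        = (J.map fun e => q.num ^ e * (q.den:ℤ) ^ (j0 - e)).sum := by
      have h := key
      rw [← aux_cast_sum q (fun e => j0 - e) J] at h
      exact_mod_cast h
    have hdvd : (q.den : ℤ) ∣ (J.map fun e => q.num ^ e * (q.den:ℤ) ^ (j0 - e)).sum := by
      apply Multiset.dvd_sum
      intro x hx
      obtain ⟨e, he, rfl⟩ := Multiset.mem_map.1 hx
      exact Dvd.dvd.mul_left (dvd_pow_self _ (by have := hltj e he; omega)) _
    rw [← keyZ] at hdvd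
    have : q.den ∣ q.num.natAbs ^ j0 := by
      have := Int.natAbs_dvd_natAbs.2 hdvd
      simpa [Int.natAbs_pow] using this
    have : q.den = 1 := (Nat.Coprime.pow_right _ hcop.symm).eq_one_of_dvd this
    omega

lemma aux_group (q : ℚ) (n : ℕ) (hn : 1 ≤ n) (α : ℝ) (hroot : α ^ n = (q : ℝ))
    (L : Multiset ℕ) :
    (L.map fun e => α ^ e).sum
      = ∑ i ∈ Finset.range n, (((((L.filter (fun e => e % n = i)).map
          fun e => q ^ (e / n)).sum : ℚ) : ℝ)) * α ^ i := by
  induction L using Multiset.induction_on with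
  | empty => simp
  | cons e L ih =>
    rw [Multiset.map_cons, Multiset.sum_cons, ih]
    have hpe : α ^ e = ((q : ℝ) ^ (e / n)) * α ^ (e % n) := by
      conv_lhs => rw [← Nat.div_add_mod e n]
      rw [pow_add, pow_mul, hroot]
    have hsplit : ∀ i, (Multiset.filter (fun e' => e' % n = i) (e ::ₘ L))
        = if e % n = i then e ::ₘ (L.filter (fun e' => e' % n = i))
          else L.filter (fun e' => e' % n = i) := by
      intro i
      split_ifs with h
      · rw [Multiset.filter_cons_of_pos _ (by simpa using h)]
      · rw [Multiset.filter_cons_of_neg _ (by simpa using h)]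
    have : ∀ i ∈ Finset.range n,
        (((((e ::ₘ L).filter (fun e' => e' % n = i)).map fun e' => q ^ (e' / n)).sum : ℚ) : ℝ) * α ^ i
        = ((((L.filter (fun e' => e' % n = i)).map fun e' => q ^ (e' / n)).sum : ℚ) : ℝ) * α ^ i
          + (if i = e % n then ((q:ℚ)^(e/n) : ℚ) * α ^ i else 0) := by
      intro i _
      rw [hsplit i]
      split_ifs with h h' h'
      · rw [Multiset.map_cons, Multiset.sum_cons]
        push_cast
        ring
      · exact absurd h.symm h'
      · exact absurd h'.symm h
      · ring
    rw [Finset.sum_congr rfl this, Finset.sum_add_distrib]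
    have hmem : e % n ∈ Finset.range n := Finset.mem_range.2 (Nat.mod_lt e (by omega))
    rw [Finset.sum_ite_eq' (Finset.range n) (e % n)
      (fun i => ((q:ℚ)^(e/n) : ℚ) * α ^ i)]
    simp only [hmem, if_pos]
    rw [hpe]
    push_cast
    ring

lemma aux_no_split (q : ℚ) (hq : 0 < q)
    (hqint : ¬ ∃ m : ℤ, q = (m : ℚ)) (hqrec : ¬ ∃ m : ℤ, q⁻¹ = (m : ℚ))
    (n : ℕ) (hn : 1 ≤ n) (α : ℝ) (hαpos : 0 < α) (hroot : α ^ n = (q : ℝ))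
    (hirr : ∀ i, 1 ≤ i → i < n → Irrational (α ^ i))
    (k : ℕ) (L : Multiset ℕ) (hcard : 2 ≤ Multiset.card L) :
    (L.map fun e => α ^ e).sum ≠ α ^ k := by
  intro heq
  -- basic facts about q
  have hb : 2 ≤ q.den := by
    rcases Nat.lt_or_ge q.den 2 with h | h
    · exfalso
      have h1 : q.den = 1 := by have := q.den_nz; omega
      exact hqint ⟨q.num, ((Rat.den_eq_one_iff q).1 h1).symm⟩
    · exact h
  have ha : 2 ≤ q.num := by
    have h1 : 0 < q.num := Rat.num_pos.2 hq
    rcases lt_or_ge q.num 2 with h | h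
    · exfalso
      have h2 : q.num = 1 := by omega
      apply hqrec
      refine ⟨q.den, ?_⟩
      have := Rat.num_div_den q
      rw [h2] at this
      rw [← this]
      simp
    · exact h
  set i0 := k % n with hi0
  set j0 := k / n with hj0
  have hi0r : i0 ∈ Finset.range n := Finset.mem_range.2 (Nat.mod_lt k (by omega))
  have hαk : α ^ k = ((q ^ j0 : ℚ) : ℝ) * α ^ i0 := by
    conv_lhs => rw [← Nat.div_add_mod k n]
    rw [pow_add, pow_mul, hroot]
    push_cast
    ring
  set r : ℕ → ℚ := fun i => ((L.filter (fun e => e % n = i)).map fun e => q ^ (e / n)).sum with hr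
  have hgroup := aux_group q n hn α hroot L
  rw [heq, hαk] at hgroup
  -- build c and apply independence
  set c : ℕ → ℚ := fun i => r i - if i = i0 then q ^ j0 else 0 with hc
  have hzero : ∑ i ∈ Finset.range n, ((c i : ℝ)) * α ^ i = 0 := by
    have : ∀ i ∈ Finset.range n, ((c i : ℝ)) * α ^ i
        = ((r i : ℝ)) * α ^ i - (if i = i0 then ((q ^ j0 : ℚ) : ℝ) * α ^ i else 0) := by
      intro i _
      simp only [hc]
      split_ifs with h
      · push_cast; ring
      · push_cast; ring
    rw [Finset.sum_congr rfl this, Finset.sum_sub_distrib]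
    rw [Finset.sum_ite_eq' (Finset.range n) i0 (fun i => ((q ^ j0 : ℚ) : ℝ) * α ^ i)]
    simp only [hi0r, if_pos]
    rw [← hgroup]
    ring
  have hcz := aux_indep q hq n hn α hαpos hroot hirr c hzero
  -- all exponents ≡ i0 mod n
  have hmod : ∀ e ∈ L, e % n = i0 := by
    intro e he
    by_contra hne
    have hin : e % n ∈ Finset.range n := Finset.mem_range.2 (Nat.mod_lt e (by omega))
    have h1 := hcz (e % n) hin
    rw [hc] at h1
    simp only [if_neg hne] at h1
    have h2 : r (e % n) = 0 := by simpa using h1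
    have h3 : L.filter (fun e' => e' % n = e % n) ≠ 0 := by
      intro h
      have : e ∈ L.filter (fun e' => e' % n = e % n) := Multiset.mem_filter.2 ⟨he, rfl⟩
      rw [h] at this
      simp at this
    exact absurd h2 (aux_pos_sum _ (fun j => pow_pos hq _) h3).ne'
  have hfilter : L.filter (fun e => e % n = i0) = L :=
    Multiset.filter_eq_self.2 (fun e he => hmod e he)
  have hri0 : r i0 = q ^ j0 := by
    have h1 := hcz i0 hi0r
    rw [hc] at h1
    simp at h1
    linarith
  -- rational equation
  have hsumq : ((L.map fun e => e / n).map fun j => q ^ j).sum = q ^ j0 := by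
    rw [Multiset.map_map]
    rw [← hri0, hr]
    simp only [hfilter]
    rfl
  have := aux_rat q hq ha hb j0 (L.map fun e => e / n) hsumq
  rw [Multiset.card_map] at this
  omega

lemma aux_mem (α : ℝ) (x : ℝ) :
    x ∈ AddSubmonoid.closure (Set.range fun k : ℕ => α ^ k) ↔
      ∃ L : Multiset ℕ, (L.map fun e => α ^ e).sum = x := by
  constructor
  · intro hx
    induction hx using AddSubmonoid.closure_induction with
    | mem x hx =>
      obtain ⟨k, rfl⟩ := hx
      exact ⟨{k}, by simp⟩
    | zero => exact ⟨0, by simp⟩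
    | add x y hx hy ihx ihy =>
      obtain ⟨Lx, hLx⟩ := ihx
      obtain ⟨Ly, hLy⟩ := ihy
      exact ⟨Lx + Ly, by rw [Multiset.map_add, Multiset.sum_add, hLx, hLy]⟩
  · rintro ⟨L, rfl⟩
    induction L using Multiset.induction_on with
    | empty => simp
    | cons e L ih =>
      rw [Multiset.map_cons, Multiset.sum_cons]
      exact AddSubmonoid.add_mem _ (AddSubmonoid.subset_closure ⟨e, rfl⟩) ih

lemma aux_sum_pos {α : ℝ} (hαpos : 0 < α) {L : Multiset ℕ} (hL : L ≠ 0) :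
    0 < (L.map fun e => α ^ e).sum := by
  obtain ⟨e, he⟩ := Multiset.exists_mem_of_ne_zero hL
  calc (0:ℝ) < α ^ e := pow_pos hαpos e
    _ ≤ _ := Multiset.single_le_sum (by
        intro x hx
        obtain ⟨y, _, rfl⟩ := Multiset.mem_map.1 hx
        exact (pow_pos hαpos y).le) _ (Multiset.mem_map.2 ⟨e, he, rfl⟩)

/-- Let `q` be a non-integer positive rational that is not the reciprocal of an integer,
and let `α` be a positive irreducible `n`-th root of `q`. Then `ℕ₀[α]` is atomic with
set of atoms exactly `{α^k : k ∈ ℕ₀}`. -/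
theorem stmt_6 (q : ℚ) (hq : 0 < q)
    (hqint : ¬ ∃ m : ℤ, q = (m : ℚ)) (hqrec : ¬ ∃ m : ℤ, q⁻¹ = (m : ℚ))
    (n : ℕ) (hn : 1 ≤ n) (α : ℝ) (hαpos : 0 < α) (hroot : α ^ n = (q : ℝ))
    (hirr : ∀ i, 1 ≤ i → i < n → Irrational (α ^ i))
    (M : AddSubmonoid ℝ)
    (hM : M = AddSubmonoid.closure (Set.range fun k : ℕ => α ^ k)) :
    (∀ x ∈ M, x ≠ 0 → ∃ l : Multiset ℝ, (∀ a ∈ l, IsAddAtomIn M a) ∧ l.sum = x) ∧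
    (∀ a, IsAddAtomIn M a ↔ ∃ k : ℕ, a = α ^ k) := by
  have hmem : ∀ x : ℝ, x ∈ M ↔ ∃ L : Multiset ℕ, (L.map fun e => α ^ e).sum = x := by
    intro x; rw [hM]; exact aux_mem α x
  have hatom : ∀ k : ℕ, IsAddAtomIn M (α ^ k) := by
    intro k
    refine ⟨(hmem _).2 ⟨{k}, by simp⟩, (pow_pos hαpos k).ne', ?_⟩
    intro u v hu hv hu0 hv0 heq
    obtain ⟨Lu, hLu⟩ := (hmem u).1 hu
    obtain ⟨Lv, hLv⟩ := (hmem v).1 hv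
    have hLu0 : Lu ≠ 0 := by rintro rfl; simp at hLu; exact hu0 hLu.symm
    have hLv0 : Lv ≠ 0 := by rintro rfl; simp at hLv; exact hv0 hLv.symm
    have hcard : 2 ≤ Multiset.card (Lu + Lv) := by
      rw [Multiset.card_add]
      have h1 : 1 ≤ Multiset.card Lu := by
        rw [Nat.one_le_iff_ne_zero]; simpa using hLu0
      have h2 : 1 ≤ Multiset.card Lv := by
        rw [Nat.one_le_iff_ne_zero]; simpa using hLv0
      omega
    refine aux_no_split q hq hqint hqrec n hn α hαpos hroot hirr k (Lu + Lv) hcard ?_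
    rw [Multiset.map_add, Multiset.sum_add, hLu, hLv, heq]
  constructor
  · intro x hx hx0
    obtain ⟨L, hL⟩ := (hmem x).1 hx
    refine ⟨L.map fun e => α ^ e, ?_, hL⟩
    intro a ha
    obtain ⟨e, _, rfl⟩ := Multiset.mem_map.1 ha
    exact hatom e
  · intro a
    constructor
    · rintro ⟨haM, ha0, hsplit⟩
      obtain ⟨L, hL⟩ := (hmem a).1 haM
      have hL0 : L ≠ 0 := by rintro rfl; simp at hL; exact ha0 hL.symm
      obtain ⟨e, he⟩ := Multiset.exists_mem_of_ne_zero hL0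
      obtain ⟨L', rfl⟩ := Multiset.exists_cons_of_mem he
      by_cases h0 : L' = 0
      · subst h0
        exact ⟨e, by simpa using hL.symm⟩
      · exfalso
        refine hsplit (α ^ e) ((L'.map fun e' => α ^ e').sum)
          ((hmem _).2 ⟨{e}, by simp⟩) ((hmem _).2 ⟨L', rfl⟩)
          (pow_pos hαpos e).ne' (aux_sum_pos hαpos h0).ne' ?_
        rw [← hL, Multiset.map_cons, Multiset.sum_cons]
    · rintro ⟨k, rfl⟩
      exact hatom k
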